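/- Let Φ : ℂ → ℂ be holomorphic outside a compact set containing the closed ball of radius R centered at 0, with Φ(z) − z ∈ L^p(ℂ) for some p > 2 and |Φ(z) − z|^p subharmonic on |z| > R. Then for all z with |z| > 2R, one has |Φ(z) − z|^p ≤ C · ‖Φ(·) − id‖_{L^p}^p / |z|^2 for a universal constant C > 0. -/

import Mathlib

open MeasureTheory Metric Complex

/-- If `Φ : ℂ → ℂ` is holomorphic outside the closed ball of radius `R`,
`Φ(z) - z ∈ L^p` for some `p > 2`, and `|Φ(z) - z|^p` is subharmonic on `|z| > R`
(encoded via the sub-mean-value property), then for `|z| > 2R` one has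
`|Φ(z) - z|^p ≤ C ‖Φ - id‖_{L^p}^p / |z|^2` for a universal constant `C > 0`. -/
theorem subharmonic_pointwise_decay_of_Lp :
    ∃ C : ℝ, 0 < C ∧
      ∀ (Φ : ℂ → ℂ) (R p : ℝ), 0 < R → 2 < p →
        DifferentiableOn ℂ Φ {z : ℂ | R < ‖z‖} →
        Integrable (fun w : ℂ => ‖Φ w - w‖ ^ p) →
        (∀ (z : ℂ) (ρ : ℝ), 0 < ρ →
            closedBall z ρ ⊆ {w : ℂ | R < ‖w‖} →
            ‖Φ z - z‖ ^ p ≤ ⨍ w in ball z ρ, ‖Φ w - w‖ ^ p) →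
        ∀ z : ℂ, 2 * R < ‖z‖ →
          ‖Φ z - z‖ ^ p ≤
            C * (∫ w : ℂ, ‖Φ w - w‖ ^ p) / ‖z‖ ^ 2 := by
  refine ⟨4 / Real.pi, by positivity, ?_⟩
  intro Φ R p hR hp _ hInt hsub z hz
  set f : ℂ → ℝ := fun w => ‖Φ w - w‖ ^ p with hf
  have hz0 : 0 < ‖z‖ := lt_trans (by positivity) hz
  set ρ := ‖z‖ / 2 with hρ
  have hρ0 : 0 < ρ := by positivity
  have hsubset : closedBall z ρ ⊆ {w : ℂ | R < ‖w‖} := by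
    intro w hw
    simp only [Set.mem_setOf_eq]
    have h1 : ‖z - w‖ ≤ ρ := by
      rw [← Complex.dist_eq, dist_comm]; exact mem_closedBall.mp hw
    have h2 : ‖z‖ ≤ ‖z - w‖ + ‖w‖ := by
      simpa using norm_add_le (z - w) w
    nlinarith [hz]
  have hmv := hsub z ρ hρ0 hsubset
  have hvol : (volume (ball z ρ)).toReal = Real.pi * ρ ^ 2 := by
    rw [Complex.volume_ball]
    rw [ENNReal.toReal_mul, ← ENNReal.ofReal_pow hρ0.le, ENNReal.toReal_ofReal (by positivity)]
    simp [mul_comm]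
  have hballle : ∫ w in ball z ρ, f w ≤ ∫ w, f w := by
    apply setIntegral_le_integral hInt
    filter_upwards with w
    positivity
  have havg : ⨍ w in ball z ρ, f w ≤ (Real.pi * ρ ^ 2)⁻¹ * ∫ w, f w := by
    rw [setAverage_eq, measureReal_def, hvol, smul_eq_mul]
    exact mul_le_mul_of_nonneg_left hballle (by positivity)
  calc f z ≤ (Real.pi * ρ ^ 2)⁻¹ * ∫ w, f w := hmv.trans havg
    _ = 4 / Real.pi * (∫ w, f w) / ‖z‖ ^ 2 := by
        rw [hρ]
        field_simp
        ring
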